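/- Let k be a nonnegative integer and μ = (μ_1, …, μ_m) a partition of n. Then for every symmetric function f ∈ Λ, ⟨q̂_μ(t), h_k · f⟩ = Σ_{τ ∈ C(μ;k)} (1−t)^{l(τ)} ⟨q̂_{μ−τ}(t), f⟩, where h_k is the complete homogeneous symmetric function of degree k. Equivalently, the adjoint h_k^* of multiplication by h_k with respect to the Hall inner product satisfies h_k^* q̂_μ(t) = Σ_{τ ∈ C(μ;k)} (1−t)^{l(τ)} q̂_{μ−τ}(t). -/

import Mathlib

open Finset

noncomputable section

abbrev FF : Type := RatFunc ℚ

/-- The ring Λ of symmetric functions over ℚ(t), as the polynomial ring in the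
algebraically independent power sums `pp 1, pp 2, …`. -/
abbrev SymF : Type := MvPolynomial ℕ+ FF

/-- The variable t of the ground field ℚ(t). -/
def tv : FF := RatFunc.X

/-- the power sum p_n -/
def pp (n : ℕ+) : SymF := MvPolynomial.X n

/-- q_n(a), defined by Σ_{n≥0} q_n(a) z^n = exp(Σ_{n≥1} ((1-a^n)/n) p_n z^n);
equivalently (taking the logarithmic derivative of the generating function)
by q_0 = 1 and n·q_n = Σ_{k=1}^{n} (1-a^k) p_k q_{n-k}. -/
def qn (a : FF) : ℕ → SymF
  | 0 => 1
  | n + 1 =>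
      (((n : FF) + 1)⁻¹) • ∑ k ∈ Finset.range (n + 1),
        (MvPolynomial.C (1 - a ^ (k + 1))) * pp ⟨k + 1, Nat.succ_pos k⟩ * qn a (n - k)
  termination_by n => n
  decreasing_by omega

/-- q̂_n(a), defined by Σ_{n≥0} q̂_n(a) z^n = exp(Σ_{n≥1} ((1-a^n)/n)(1+p_n) z^n);
equivalently by q̂_0 = 1 and n·q̂_n = Σ_{k=1}^{n} (1-a^k)(1+p_k) q̂_{n-k}. -/
def qhat (a : FF) : ℕ → SymF
  | 0 => 1
  | n + 1 =>
      (((n : FF) + 1)⁻¹) • ∑ k ∈ Finset.range (n + 1),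
        (MvPolynomial.C (1 - a ^ (k + 1))) * (1 + pp ⟨k + 1, Nat.succ_pos k⟩) * qhat a (n - k)
  termination_by n => n
  decreasing_by omega

/-- the number of nonzero parts of a composition -/
def ell {l : ℕ} (mu : Fin l → ℕ) : ℕ := (Finset.univ.filter fun i => mu i ≠ 0).card

/-- q̂_μ(a) = ∏_i q̂_{μ_i}(a). -/
def qhatProd (a : FF) {l : ℕ} (mu : Fin l → ℕ) : SymF := ∏ i, qhat a (mu i)

/-- q_μ(a) = ∏_i q_{μ_i}(a). -/
def qnProd (a : FF) {l : ℕ} (mu : Fin l → ℕ) : SymF := ∏ i, qn a (mu i)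

/-- z_λ, where the finitely supported function d records the multiplicities of the parts. -/
def zfac (d : ℕ+ →₀ ℕ) : FF :=
  ∏ i ∈ d.support, (((i : ℕ) : FF) ^ (d i) * (Nat.factorial (d i) : FF))

/-- The Hall inner product on Λ, determined by ⟨p_λ, p_μ⟩ = δ_{λμ} z_λ. -/
def hall (f g : SymF) : FF :=
  ∑ d ∈ f.support, MvPolynomial.coeff d f * MvPolynomial.coeff d g * zfac d

/-- the complete homogeneous symmetric function h_n, defined by
Σ_{n≥0} h_n z^n = exp(Σ_{n≥1} p_n z^n / n); equivalently by h_0 = 1 and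
n·h_n = Σ_{k=1}^{n} p_k h_{n-k} (Newton's identity). -/
def hh : ℕ → SymF
  | 0 => 1
  | n + 1 =>
      (((n : FF) + 1)⁻¹) • ∑ k ∈ Finset.range (n + 1),
        pp ⟨k + 1, Nat.succ_pos k⟩ * hh (n - k)
  termination_by n => n
  decreasing_by omega

/-- h_k for k ∈ ℤ, with h_k = 0 for k < 0. -/
def hZ (k : ℤ) : SymF := if 0 ≤ k then hh k.toNat else 0

/-- The Schur function s_λ (via the Jacobi–Trudi formula). -/
def schur {r : ℕ} (lam : Fin r → ℕ) : SymF :=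
  Matrix.det (Matrix.of fun i j : Fin r => hZ ((lam i : ℤ) + (j : ℤ) - (i : ℤ)))

/-- C(μ;k): compositions τ ⊂ μ with |τ| = k. -/
def Cset {l : ℕ} (mu : Fin l → ℕ) (k : ℕ) : Finset (Fin l → ℕ) :=
  (Finset.Iic mu).filter fun τ => ∑ i, τ i = k

open Finset MvPolynomial

lemma zfac_superset (d : ℕ+ →₀ ℕ) (S : Finset ℕ+) (h : d.support ⊆ S) :
    zfac d = ∏ i ∈ S, (((i : ℕ) : FF) ^ (d i) * (Nat.factorial (d i) : FF)) := by
  rw [zfac]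
  exact Finset.prod_subset h (fun i _ hi => by
    simp [Finsupp.notMem_support_iff.mp hi])

lemma zfac_add_single (d : ℕ+ →₀ ℕ) (n : ℕ+) :
    zfac (d + Finsupp.single n 1) = ((n : ℕ) : FF) * (((d n : ℕ) : FF) + 1) * zfac d := by
  set S : Finset ℕ+ := insert n d.support with hS
  have h1 : (d + Finsupp.single n 1).support ⊆ S := by
    refine (Finsupp.support_add).trans ?_
    intro i hi
    rcases Finset.mem_union.mp hi with h | h
    · exact Finset.mem_insert_of_mem h
    · rw [Finsupp.support_single_ne_zero n one_ne_zero] at h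
      simp only [Finset.mem_singleton] at h
      simp [hS, h]
  have h2 : d.support ⊆ S := Finset.subset_insert _ _
  rw [zfac_superset _ S h1, zfac_superset d S h2]
  have hn : n ∈ S := Finset.mem_insert_self n _
  rw [← Finset.prod_erase_mul _ _ hn, ← Finset.prod_erase_mul _ _ hn]
  have heq : ∀ i ∈ S.erase n,
      ((i : ℕ) : FF) ^ ((d + Finsupp.single n 1 : ℕ+ →₀ ℕ) i) * (Nat.factorial ((d + Finsupp.single n 1 : ℕ+ →₀ ℕ) i) : FF)
      = ((i : ℕ) : FF) ^ (d i) * (Nat.factorial (d i) : FF) := by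
    intro i hi
    have : i ≠ n := Finset.ne_of_mem_erase hi
    simp [Finsupp.add_apply, Finsupp.single_apply, Ne.symm this]
  rw [Finset.prod_congr rfl heq]
  have hv : (d + Finsupp.single n 1 : ℕ+ →₀ ℕ) n = d n + 1 := by
    simp [Finsupp.add_apply, Finsupp.single_apply]
  rw [hv, pow_succ, Nat.factorial_succ]
  push_cast
  ring

lemma hall_superset (f g : SymF) (S : Finset (ℕ+ →₀ ℕ)) (h : f.support ⊆ S) :
    hall f g = ∑ d ∈ S, coeff d f * coeff d g * zfac d := by
  rw [hall]
  exact Finset.sum_subset h (fun d _ hd => by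
    simp [MvPolynomial.notMem_support_iff.mp hd])

lemma hall_add_left (f f' g : SymF) : hall (f + f') g = hall f g + hall f' g := by
  rw [hall_superset (f + f') g (f.support ∪ f'.support)
      (MvPolynomial.support_add),
    hall_superset f g (f.support ∪ f'.support) (Finset.subset_union_left),
    hall_superset f' g (f.support ∪ f'.support) (Finset.subset_union_right),
    ← Finset.sum_add_distrib]
  exact Finset.sum_congr rfl fun d _ => by rw [coeff_add]; ring

lemma hall_zero_left (g : SymF) : hall 0 g = 0 := by simp [hall]

lemma hall_sum_left {ι : Type*} (s : Finset ι) (F : ι → SymF) (g : SymF) :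
    hall (∑ i ∈ s, F i) g = ∑ i ∈ s, hall (F i) g := by
  induction s using Finset.cons_induction with
  | empty => simp [hall_zero_left]
  | cons a s ha ih => rw [Finset.sum_cons, Finset.sum_cons, hall_add_left, ih]

lemma hall_smul_left (a : FF) (f g : SymF) : hall (a • f) g = a * hall f g := by
  rw [hall_superset (a • f) g f.support (MvPolynomial.support_smul), hall, Finset.mul_sum]
  exact Finset.sum_congr rfl fun d _ => by rw [coeff_smul]; simp [smul_eq_mul]; ring

lemma hall_monomial_left (d : ℕ+ →₀ ℕ) (a : FF) (g : SymF) :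
    hall (monomial d a) g = a * coeff d g * zfac d := by
  classical
  rcases eq_or_ne a 0 with rfl | ha
  · simp [hall_zero_left]
  · rw [hall, MvPolynomial.support_monomial, if_neg ha, Finset.sum_singleton, coeff_monomial,
      if_pos rfl]

lemma hall_add_right (f g g' : SymF) : hall f (g + g') = hall f g + hall f g' := by
  simp only [hall, coeff_add, ← Finset.sum_add_distrib]
  exact Finset.sum_congr rfl fun d _ => by ring

lemma hall_smul_right (a : FF) (f g : SymF) : hall f (a • g) = a * hall f g := by
  simp only [hall, coeff_smul, smul_eq_mul, Finset.mul_sum]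
  exact Finset.sum_congr rfl fun d _ => by ring

lemma hall_sum_right {ι : Type*} (s : Finset ι) (f : SymF) (G : ι → SymF) :
    hall f (∑ i ∈ s, G i) = ∑ i ∈ s, hall f (G i) := by
  induction s using Finset.cons_induction with
  | empty => simp [hall]
  | cons a s ha ih => rw [Finset.sum_cons, Finset.sum_cons, hall_add_right, ih]
lemma hall_monomial_pp_mul (n : ℕ+) (d : ℕ+ →₀ ℕ) (a : FF) (g : SymF) :
    hall (monomial d a) (pp n * g) = hall (((n : ℕ) : FF) • pderiv n (monomial d a)) g := by
  classical
  rw [pp, pderiv_monomial, MvPolynomial.smul_monomial, hall_monomial_left, hall_monomial_left,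
    coeff_X_mul']
  rcases eq_or_ne (d n) 0 with h0 | h0
  · rw [if_neg (by simp [Finsupp.mem_support_iff, h0])]
    simp [h0]
  · rw [if_pos (by simp [Finsupp.mem_support_iff, h0])]
    have hle : Finsupp.single n 1 ≤ d := Finsupp.single_le_iff.mpr (Nat.one_le_iff_ne_zero.mpr h0)
    have hz : zfac d = ((n : ℕ) : FF) * (((( d - Finsupp.single n 1 : ℕ+ →₀ ℕ) n : ℕ)) + 1 : FF) * zfac (d - Finsupp.single n 1) := by
      conv_lhs => rw [show d = (d - Finsupp.single n 1) + Finsupp.single n 1 from (tsub_add_cancel_of_le hle).symm]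
      rw [zfac_add_single]
    rw [hz]
    have hsub : ((d - Finsupp.single n 1 : ℕ+ →₀ ℕ) n : ℕ) = d n - 1 := by
      rw [Finsupp.tsub_apply, Finsupp.single_eq_same]
    rw [hsub]
    have hc : ((d n - 1 : ℕ) : FF) + 1 = ((d n : ℕ) : FF) := by
      rw [show ((1:FF)) = ((1:ℕ):FF) from by norm_num, ← Nat.cast_add]
      exact congrArg (fun x : ℕ => (x : FF)) (by omega)
    rw [hc]
    ring_nf

lemma hall_pp_mul (n : ℕ+) (f g : SymF) :
    hall f (pp n * g) = hall (((n : ℕ) : FF) • pderiv n f) g := by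
  conv_lhs => rw [f.as_sum]
  conv_rhs => rw [f.as_sum]
  rw [map_sum (pderiv n), Finset.smul_sum, hall_sum_left, hall_sum_left]
  exact Finset.sum_congr rfl fun d _ => hall_monomial_pp_mul n d _ g
/-- The adjoint of multiplication by `hh k` w.r.t. the Hall inner product. -/
def Hop : ℕ → SymF → SymF
  | 0, f => f
  | n + 1, f =>
      (((n : FF) + 1)⁻¹) • ∑ k ∈ Finset.range (n + 1),
        Hop (n - k) ((((k : ℕ) + 1 : ℕ) : FF) • pderiv ⟨k + 1, Nat.succ_pos k⟩ f)
  termination_by n => n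
  decreasing_by omega

lemma Hop_zero (f : SymF) : Hop 0 f = f := by rw [Hop]

lemma Hop_zero_arg : ∀ K, Hop K (0 : SymF) = 0
  | 0 => Hop_zero 0
  | n + 1 => by
      rw [Hop]
      have : ∀ k ∈ Finset.range (n + 1),
          Hop (n - k) ((((k : ℕ) + 1 : ℕ) : FF) • pderiv ⟨k + 1, Nat.succ_pos k⟩ (0 : SymF)) = 0 := by
        intro k hk
        rw [map_zero, smul_zero]
        exact Hop_zero_arg (n - k)
      rw [Finset.sum_congr rfl this, Finset.sum_const_zero, smul_zero]
  termination_by K => K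
  decreasing_by omega

lemma Hop_add : ∀ K (f g : SymF), Hop K (f + g) = Hop K f + Hop K g
  | 0, f, g => by rw [Hop_zero, Hop_zero, Hop_zero]
  | n + 1, f, g => by
      rw [Hop, Hop, Hop, ← smul_add, ← Finset.sum_add_distrib]
      congr 1
      refine Finset.sum_congr rfl fun k hk => ?_
      rw [map_add, smul_add, Hop_add (n - k)]
  termination_by K => K
  decreasing_by omega

lemma Hop_smul : ∀ K (a : FF) (f : SymF), Hop K (a • f) = a • Hop K f
  | 0, a, f => by rw [Hop_zero, Hop_zero]
  | n + 1, a, f => by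
      have key : ∀ k ∈ Finset.range (n + 1),
          Hop (n - k) ((((k : ℕ) + 1 : ℕ) : FF) • pderiv ⟨k + 1, Nat.succ_pos k⟩ (a • f))
          = a • Hop (n - k) ((((k : ℕ) + 1 : ℕ) : FF) • pderiv ⟨k + 1, Nat.succ_pos k⟩ f) := by
        intro k hk
        rw [Derivation.map_smul, smul_comm, Hop_smul (n - k)]
      rw [Hop, Hop, Finset.sum_congr rfl key, ← Finset.smul_sum, smul_comm]
  termination_by K => K
  decreasing_by omega

lemma Hop_sum {ι : Type*} (K : ℕ) (s : Finset ι) (F : ι → SymF) :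
    Hop K (∑ i ∈ s, F i) = ∑ i ∈ s, Hop K (F i) := by
  induction s using Finset.cons_induction with
  | empty => simp [Hop_zero_arg]
  | cons a s ha ih => rw [Finset.sum_cons, Finset.sum_cons, Hop_add, ih]

lemma Hop_C_mul (K : ℕ) (a : FF) (f : SymF) :
    Hop K (MvPolynomial.C a * f) = MvPolynomial.C a * Hop K f := by
  rw [← MvPolynomial.smul_eq_C_mul, ← MvPolynomial.smul_eq_C_mul, Hop_smul]

/-- adjointness: multiplication by `hh K` is adjoint to `Hop K`. -/
lemma hall_hh_mul : ∀ K (f g : SymF), hall f (hh K * g) = hall (Hop K f) g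
  | 0, f, g => by rw [hh, one_mul, Hop_zero]
  | n + 1, f, g => by
      rw [hh, Hop, smul_mul_assoc, hall_smul_right, hall_smul_left, Finset.sum_mul,
        hall_sum_right, hall_sum_left]
      congr 1
      refine Finset.sum_congr rfl fun k hk => ?_
      rw [mul_assoc, hall_pp_mul ⟨k + 1, Nat.succ_pos k⟩, hall_hh_mul (n - k)]
      rfl
  termination_by K => K
  decreasing_by omega
instance : CharZero FF := charZero_of_injective_algebraMap (algebraMap ℚ FF).injective

lemma sum_range_ite_lt {β : Type*} [AddCommMonoid β] {M N : ℕ} (h : M ≤ N) (f : ℕ → β) :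
    ∑ k ∈ Finset.range N, (if k < M then f k else 0) = ∑ k ∈ Finset.range M, f k := by
  rw [← Finset.sum_subset (Finset.range_subset_range.mpr h)
      (fun x _ hx => if_neg (by simp only [Finset.mem_range] at hx; omega))]
  exact Finset.sum_congr rfl fun k hk => if_pos (Finset.mem_range.mp hk)

lemma qhat_zero : qhat tv 0 = 1 := by rw [qhat]

lemma qhat_rec (m : ℕ) :
    ((m : ℕ) : FF) • qhat tv m =
      ∑ k ∈ Finset.range m,
        MvPolynomial.C (1 - tv ^ (k + 1)) * (1 + pp ⟨k + 1, Nat.succ_pos k⟩) * qhat tv (m - 1 - k) := by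
  cases m with
  | zero => simp
  | succ n =>
      rw [qhat, smul_smul]
      have h : (((n + 1 : ℕ)) : FF) * (((n : FF) + 1)⁻¹) = 1 := by
        have h0 : ((n : FF) + 1) ≠ 0 := Nat.cast_add_one_ne_zero n
        push_cast
        field_simp
      rw [h, one_smul]
      exact Finset.sum_congr rfl fun k _ => by norm_num

lemma pderiv_qhat (n : ℕ+) : ∀ m : ℕ, ((n : ℕ) : FF) • pderiv n (qhat tv m) =
    if (n : ℕ) ≤ m then MvPolynomial.C (1 - tv ^ (n : ℕ)) * qhat tv (m - (n : ℕ)) else 0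
  | 0 => by
      rw [qhat_zero, Derivation.map_one_eq_zero, smul_zero,
        if_neg (by have := n.pos; omega)]
  | m + 1 => by
      have hn1 : 1 ≤ (n : ℕ) := n.pos
      obtain ⟨M, hM⟩ : ∃ M, M = m + 1 - (n : ℕ) := ⟨_, rfl⟩
      have key : ∀ k ∈ Finset.range (m + 1),
          ((n : ℕ) : FF) • pderiv n
            (MvPolynomial.C (1 - tv ^ (k + 1)) * (1 + pp ⟨k + 1, Nat.succ_pos k⟩) * qhat tv (m - k))
          = (if k = (n : ℕ) - 1 then
               MvPolynomial.C (1 - tv ^ (k + 1)) *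
                 (MvPolynomial.C (((n : ℕ) : FF)) * qhat tv (m - k))
             else 0)
            + (if k < M then
                MvPolynomial.C (1 - tv ^ (n : ℕ)) *
                  (MvPolynomial.C (1 - tv ^ (k + 1)) * (1 + pp ⟨k + 1, Nat.succ_pos k⟩) *
                    qhat tv (M - 1 - k))
              else 0) := by
        intro k hk
        have hkm : k ≤ m := Nat.lt_succ_iff.mp (Finset.mem_range.mp hk)
        have hiff : (k < M) ↔ ((n : ℕ) ≤ m - k) := by omega
        have harg : m - k - (n : ℕ) = M - 1 - k := by omega
        rw [show pp ⟨k + 1, Nat.succ_pos k⟩ = MvPolynomial.X ⟨k + 1, Nat.succ_pos k⟩ from rfl, mul_assoc, MvPolynomial.smul_eq_C_mul, pderiv_C_mul, pderiv_mul, map_add,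
          Derivation.map_one_eq_zero, zero_add]
        have IH := pderiv_qhat n (m - k)
        rw [MvPolynomial.smul_eq_C_mul] at IH
        by_cases h2 : k < M
        · rw [if_pos (hiff.mp h2), harg] at IH
          rw [if_pos h2]
          by_cases h1 : k = (n : ℕ) - 1
          · have hjn : (⟨k + 1, Nat.succ_pos k⟩ : ℕ+) = n :=
              PNat.coe_injective (by omega : k + 1 = (n : ℕ))
            rw [hjn, pderiv_X_self, if_pos h1]
            linear_combination
              (MvPolynomial.C (1 - tv ^ (k + 1)) * (1 + MvPolynomial.X (R := FF) n)) * IH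
          · have hjn : (⟨k + 1, Nat.succ_pos k⟩ : ℕ+) ≠ n := fun h => h1 (by
              have hh : k + 1 = (n : ℕ) := congrArg (fun x : ℕ+ => (x : ℕ)) h
              omega)
            have hX : (pderiv n) (MvPolynomial.X (R := FF) ⟨k + 1, Nat.succ_pos k⟩) = 0 :=
              pderiv_X_of_ne hjn
            rw [if_neg h1]
            linear_combination
              (MvPolynomial.C (1 - tv ^ (k + 1)) *
                (1 + MvPolynomial.X (R := FF) ⟨k + 1, Nat.succ_pos k⟩)) * IH
              + (MvPolynomial.C (((n : ℕ) : FF)) * MvPolynomial.C (1 - tv ^ (k + 1)) *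
                  qhat tv (m - k)) * hX
        · rw [if_neg (fun hc => h2 (hiff.mpr hc))] at IH
          rw [if_neg h2]
          by_cases h1 : k = (n : ℕ) - 1
          · have hjn : (⟨k + 1, Nat.succ_pos k⟩ : ℕ+) = n :=
              PNat.coe_injective (by omega : k + 1 = (n : ℕ))
            rw [hjn, pderiv_X_self, if_pos h1]
            linear_combination
              (MvPolynomial.C (1 - tv ^ (k + 1)) * (1 + MvPolynomial.X (R := FF) n)) * IH
          · have hjn : (⟨k + 1, Nat.succ_pos k⟩ : ℕ+) ≠ n := fun h => h1 (by
              have hh : k + 1 = (n : ℕ) := congrArg (fun x : ℕ+ => (x : ℕ)) h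
              omega)
            have hX : (pderiv n) (MvPolynomial.X (R := FF) ⟨k + 1, Nat.succ_pos k⟩) = 0 :=
              pderiv_X_of_ne hjn
            rw [if_neg h1]
            linear_combination
              (MvPolynomial.C (1 - tv ^ (k + 1)) *
                (1 + MvPolynomial.X (R := FF) ⟨k + 1, Nat.succ_pos k⟩)) * IH
              + (MvPolynomial.C (((n : ℕ) : FF)) * MvPolynomial.C (1 - tv ^ (k + 1)) *
                  qhat tv (m - k)) * hX
      rw [qhat, Derivation.map_smul, map_sum,
        smul_comm (((n : ℕ)) : FF) (((m : FF) + 1)⁻¹), Finset.smul_sum,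
        Finset.sum_congr rfl key, Finset.sum_add_distrib,
        Finset.sum_ite_eq' (Finset.range (m + 1)) ((n : ℕ) - 1),
        sum_range_ite_lt (show M ≤ m + 1 by omega), ← Finset.mul_sum, ← qhat_rec]
      by_cases hn : (n : ℕ) ≤ m + 1
      · rw [if_pos (Finset.mem_range.mpr (by omega)), if_pos hn,
          show (n : ℕ) - 1 + 1 = (n : ℕ) from by omega,
          show m - ((n : ℕ) - 1) = M from by omega,
          show m + 1 - (n : ℕ) = M from hM.symm]
        have h1 : (((m : FF) + 1)⁻¹) * ((((n : ℕ)) : FF) + ((M : ℕ) : FF)) = 1 := by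
          have hnm : ((n : ℕ)) + M = m + 1 := by omega
          have hcast : ((((n : ℕ)) : FF) + ((M : ℕ) : FF)) = ((m : FF) + 1) := by
            rw [← Nat.cast_add, hnm]; push_cast; ring
          rw [hcast]
          exact inv_mul_cancel₀ (Nat.cast_add_one_ne_zero m)
        have hone : (MvPolynomial.C (((m : FF) + 1)⁻¹) *
            (MvPolynomial.C ((((n : ℕ))) : FF) + MvPolynomial.C ((M : ℕ) : FF)) : SymF) = 1 := by
          rw [← map_add, ← map_mul, h1, map_one]
        rw [MvPolynomial.smul_eq_C_mul, MvPolynomial.smul_eq_C_mul]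
        linear_combination (MvPolynomial.C (1 - tv ^ (n : ℕ)) * qhat tv M) * hone
      · rw [if_neg (by simp only [Finset.mem_range]; omega), if_neg hn,
          show M = 0 from by omega]
        simp
  termination_by m => m
  decreasing_by omega
lemma geom_id (t : FF) : ∀ n : ℕ,
    (∑ k ∈ Finset.range n, (1 - t ^ (k + 1)) * (1 - t)) + (1 - t ^ (n + 1))
      = ((n : FF) + 1) * (1 - t) := by
  intro n
  induction n with
  | zero => simp
  | succ n ih =>
      rw [Finset.sum_range_succ]
      push_cast
      push_cast at ih
      ring_nf
      ring_nf at ih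
      linear_combination ih

lemma Hop_qhat : ∀ K m : ℕ, Hop K (qhat tv m) =
    if K = 0 then qhat tv m
    else if K ≤ m then MvPolynomial.C (1 - tv) * qhat tv (m - K) else 0
  | 0, m => by rw [Hop_zero, if_pos rfl]
  | K + 1, m => by
      have hD : ∀ k : ℕ, ((((k : ℕ) + 1 : ℕ)) : FF) •
            pderiv (σ := ℕ+) ⟨k + 1, Nat.succ_pos k⟩ (qhat tv m)
          = if k + 1 ≤ m then MvPolynomial.C (1 - tv ^ (k + 1)) * qhat tv (m - (k + 1)) else 0 :=
        fun k => pderiv_qhat ⟨k + 1, Nat.succ_pos k⟩ m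
      rw [Hop]
      by_cases hm : K + 1 ≤ m
      · have key1 : ∀ k ∈ Finset.range K,
            Hop (K - k) ((((k : ℕ) + 1 : ℕ) : FF) • pderiv ⟨k + 1, Nat.succ_pos k⟩ (qhat tv m))
            = MvPolynomial.C ((1 - tv ^ (k + 1)) * (1 - tv)) * qhat tv (m - (K + 1)) := by
          intro k hk
          have hkK : k < K := Finset.mem_range.mp hk
          rw [hD k, if_pos (by omega), Hop_C_mul, Hop_qhat (K - k) (m - (k + 1)),
            if_neg (by omega), if_pos (by omega),
            show m - (k + 1) - (K - k) = m - (K + 1) from by omega, map_mul]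
          ring
        have keyK : Hop (K - K)
              ((((K : ℕ) + 1 : ℕ) : FF) • pderiv ⟨K + 1, Nat.succ_pos K⟩ (qhat tv m))
            = MvPolynomial.C (1 - tv ^ (K + 1)) * qhat tv (m - (K + 1)) := by
          rw [hD K, if_pos hm, Nat.sub_self, Hop_zero]
        rw [Finset.sum_range_succ, Finset.sum_congr rfl key1, keyK, ← Finset.sum_mul,
          ← map_sum, ← add_mul, ← map_add, geom_id tv K,
          if_neg (Nat.succ_ne_zero K), if_pos hm, MvPolynomial.smul_eq_C_mul, ← mul_assoc,
          ← map_mul, show (((K : FF) + 1)⁻¹ * (((K : FF) + 1) * (1 - tv))) = 1 - tv from by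
            have : ((K : FF) + 1) ≠ 0 := Nat.cast_add_one_ne_zero K
            field_simp]
      · have key0 : ∀ k ∈ Finset.range (K + 1),
            Hop (K - k) ((((k : ℕ) + 1 : ℕ) : FF) • pderiv ⟨k + 1, Nat.succ_pos k⟩ (qhat tv m))
            = 0 := by
          intro k hk
          have hkK : k < K + 1 := Finset.mem_range.mp hk
          rw [hD k]
          by_cases hk1 : k + 1 ≤ m
          · rw [if_pos hk1, Hop_C_mul, Hop_qhat (K - k) (m - (k + 1)),
              if_neg (by omega), if_neg (by omega), mul_zero]
          · rw [if_neg hk1, Hop_zero_arg]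
        rw [Finset.sum_congr rfl key0, Finset.sum_const_zero, smul_zero,
          if_neg (Nat.succ_ne_zero K), if_neg hm]
  termination_by K m => K
  decreasing_by all_goals omega
/-- abbreviation for the summand in `Hop`'s recursion -/
def DD (k : ℕ) (x : SymF) : SymF :=
  (((k : ℕ) + 1 : ℕ) : FF) • pderiv (σ := ℕ+) ⟨k + 1, Nat.succ_pos k⟩ x

lemma Hop_succ (n : ℕ) (f : SymF) :
    Hop (n + 1) f = (((n : FF) + 1)⁻¹) • ∑ k ∈ Finset.range (n + 1), Hop (n - k) (DD k f) := by
  rw [Hop]; rfl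

lemma hop_succ_sum (M : ℕ) (x : SymF) :
    ∑ k ∈ Finset.range (M + 1), Hop (M - k) (DD k x) = ((M : FF) + 1) • Hop (M + 1) x := by
  rw [Hop_succ, smul_smul, mul_inv_cancel₀ (Nat.cast_add_one_ne_zero M), one_smul]

lemma DD_mul (k : ℕ) (f g : SymF) : DD k (f * g) = DD k f * g + f * DD k g := by
  rw [DD, DD, DD, pderiv_mul (R := FF) (σ := ℕ+) (i := ⟨k + 1, Nat.succ_pos k⟩), smul_add, smul_mul_assoc, mul_smul_comm]

lemma Hop_mul : ∀ K (f g : SymF),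
    Hop K (f * g) = ∑ j ∈ Finset.range (K + 1), Hop (K - j) f * Hop j g
  | 0, f, g => by simp [Hop_zero]
  | K + 1, f, g => by
      have hsplit : ∀ k ∈ Finset.range (K + 1),
          Hop (K - k) (DD k (f * g))
          = (∑ i ∈ Finset.range (K - k + 1), Hop (K - k - i) (DD k f) * Hop i g)
            + (∑ i ∈ Finset.range (K - k + 1), Hop i f * Hop (K - k - i) (DD k g)) := by
        intro k hk
        rw [DD_mul, Hop_add, Hop_mul (K - k) (DD k f) g, Hop_mul (K - k) f (DD k g)]
        congr 1
        rw [← Finset.sum_range_reflect]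
        refine Finset.sum_congr rfl fun i hi => ?_
        have hi' : i ≤ K - k := Nat.lt_succ_iff.mp (Finset.mem_range.mp hi)
        rw [show K - k + 1 - 1 - i = K - k - i from by omega,
          show K - k - (K - k - i) = i from by omega]
      rw [Hop_succ, Finset.sum_congr rfl hsplit, Finset.sum_add_distrib]
      have cond : ∀ (k i : ℕ),
          k ∈ Finset.range (K + 1) ∧ i ∈ Finset.range (K - k + 1)
          ↔ k ∈ Finset.range (K - i + 1) ∧ i ∈ Finset.range (K + 1) := by
        intro k i; simp only [Finset.mem_range]; omega
      have hS1 : ∑ k ∈ Finset.range (K + 1), ∑ i ∈ Finset.range (K - k + 1),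
            Hop (K - k - i) (DD k f) * Hop i g
          = ∑ i ∈ Finset.range (K + 1),
              (((K - i : ℕ) : FF) + 1) • (Hop (K - i + 1) f * Hop i g) := by
        rw [Finset.sum_comm' cond]
        refine Finset.sum_congr rfl fun i hi => ?_
        have step : ∀ k ∈ Finset.range (K - i + 1),
            Hop (K - k - i) (DD k f) * Hop i g = Hop (K - i - k) (DD k f) * Hop i g := by
          intro k hk; rw [show K - k - i = K - i - k from by omega]
        rw [Finset.sum_congr rfl step, ← Finset.sum_mul, hop_succ_sum (K - i) f,
          smul_mul_assoc]
      have hS2 : ∑ k ∈ Finset.range (K + 1), ∑ i ∈ Finset.range (K - k + 1),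
            Hop i f * Hop (K - k - i) (DD k g)
          = ∑ a ∈ Finset.range (K + 1),
              (((K - a : ℕ) : FF) + 1) • (Hop a f * Hop (K - a + 1) g) := by
        rw [Finset.sum_comm' cond]
        refine Finset.sum_congr rfl fun a ha => ?_
        have step : ∀ k ∈ Finset.range (K - a + 1),
            Hop a f * Hop (K - k - a) (DD k g) = Hop a f * Hop (K - a - k) (DD k g) := by
          intro k hk; rw [show K - k - a = K - a - k from by omega]
        rw [Finset.sum_congr rfl step, ← Finset.mul_sum, hop_succ_sum (K - a) g,
          mul_smul_comm]
      rw [hS1, hS2]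
      have e1 : ∑ i ∈ Finset.range (K + 1),
            (((K - i : ℕ) : FF) + 1) • (Hop (K - i + 1) f * Hop i g)
          = ∑ j ∈ Finset.range (K + 2),
              (((K + 1 - j : ℕ)) : FF) • (Hop (K + 1 - j) f * Hop j g) := by
        rw [show K + 2 = (K + 1) + 1 from rfl,
          Finset.sum_range_succ
            (f := fun j => (((K + 1 - j : ℕ)) : FF) • (Hop (K + 1 - j) f * Hop j g)),
          Nat.sub_self, Nat.cast_zero, zero_smul, add_zero]
        refine Finset.sum_congr rfl fun i hi => ?_
        have hi' : i ≤ K := Nat.lt_succ_iff.mp (Finset.mem_range.mp hi)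
        rw [show K + 1 - i = (K - i) + 1 from by omega, Nat.cast_add, Nat.cast_one]
      have e2 : ∑ a ∈ Finset.range (K + 1),
            (((K - a : ℕ) : FF) + 1) • (Hop a f * Hop (K - a + 1) g)
          = ∑ j ∈ Finset.range (K + 2),
              ((j : ℕ) : FF) • (Hop (K + 1 - j) f * Hop j g) := by
        rw [show K + 2 = (K + 1) + 1 from rfl,
          Finset.sum_range_succ'
            (f := fun j => ((j : ℕ) : FF) • (Hop (K + 1 - j) f * Hop j g)),
          Nat.cast_zero, zero_smul, add_zero,
          ← Finset.sum_range_reflect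
            (f := fun a => (((K - a : ℕ) : FF) + 1) • (Hop a f * Hop (K - a + 1) g))]
        refine Finset.sum_congr rfl fun j hj => ?_
        have hj' : j ≤ K := Nat.lt_succ_iff.mp (Finset.mem_range.mp hj)
        rw [show K + 1 - 1 - j = K - j from by omega,
          show K - (K - j) = j from by omega,
          show K + 1 - (j + 1) = K - j from by omega, Nat.cast_add, Nat.cast_one]
      rw [e1, e2, ← Finset.sum_add_distrib]
      have e3 : ∀ j ∈ Finset.range (K + 2),
          (((K + 1 - j : ℕ)) : FF) • (Hop (K + 1 - j) f * Hop j g)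
            + ((j : ℕ) : FF) • (Hop (K + 1 - j) f * Hop j g)
          = ((K : FF) + 1) • (Hop (K + 1 - j) f * Hop j g) := by
        intro j hj
        have hj' : j ≤ K + 1 := Nat.lt_succ_iff.mp (Finset.mem_range.mp hj)
        rw [← add_smul]
        congr 1
        rw [← Nat.cast_add, show K + 1 - j + j = K + 1 from by omega]
        push_cast; ring
      rw [Finset.sum_congr rfl e3, ← Finset.smul_sum, smul_smul,
        inv_mul_cancel₀ (Nat.cast_add_one_ne_zero K), one_smul]
  termination_by K => K
  decreasing_by all_goals omega
lemma Hop_prod : ∀ (m : ℕ) (mu : Fin m → ℕ) (K : ℕ),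
    Hop K (∏ i, qhat tv (mu i)) = ∑ τ ∈ Cset mu K, ∏ i, Hop (τ i) (qhat tv (mu i))
  | 0, mu, K => by
      have hCs : Cset mu K = if K = 0 then {mu} else ∅ := by
        ext τ
        have hτ : τ = mu := funext fun i => i.elim0
        by_cases hK : K = 0
        · simp [Cset, hτ, hK]
        · simp [Cset, hτ, hK, eq_comm]
      have hprod : (∏ i : Fin 0, qhat tv (mu i)) = qhat tv 0 := by
        rw [qhat_zero]; exact Finset.prod_of_isEmpty _
      rw [hprod, Hop_qhat, hCs]
      by_cases hK : K = 0
      · rw [if_pos hK, if_pos hK, Finset.sum_singleton]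
        rw [qhat_zero]
        exact (Finset.prod_of_isEmpty _).symm
      · rw [if_neg hK, if_neg hK, if_neg (by omega), Finset.sum_empty]
  | m + 1, mu, K => by
      have hvan : ∀ j ∈ Finset.range (K + 1),
          (∑ τ' ∈ Cset (fun i => mu i.succ) j,
            Hop (K - j) (qhat tv (mu 0)) * ∏ i, Hop (τ' i) (qhat tv (mu i.succ))) ≠ 0 →
          K - j ≤ mu 0 := by
        intro j hj hne
        by_contra hgt
        apply hne
        have h0 : Hop (K - j) (qhat tv (mu 0)) = 0 := by
          rw [Hop_qhat, if_neg (by omega), if_neg (by omega)]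
        simp [h0]
      have hIH : ∀ j ∈ Finset.range (K + 1),
          Hop (K - j) (qhat tv (mu 0)) * Hop j (∏ i : Fin m, qhat tv (mu i.succ))
          = ∑ τ' ∈ Cset (fun i => mu i.succ) j,
              Hop (K - j) (qhat tv (mu 0)) * ∏ i, Hop (τ' i) (qhat tv (mu i.succ)) := by
        intro j hj
        rw [Hop_prod m (fun i => mu i.succ) j, Finset.mul_sum]
      rw [Fin.prod_univ_succ, Hop_mul, Finset.sum_congr rfl hIH,
        ← Finset.sum_filter_of_ne hvan, Finset.sum_sigma']
      refine Finset.sum_nbij' (i := fun x => Fin.cons (K - x.1) x.2)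
        (j := fun τ => ⟨∑ i : Fin m, τ i.succ, fun i => τ i.succ⟩) ?_ ?_ ?_ ?_ ?_
      · rintro ⟨j, τ'⟩ hx
        dsimp only
        rw [Finset.mem_sigma] at hx
        obtain ⟨hj, hτ'⟩ := hx
        rw [Finset.mem_filter, Finset.mem_range] at hj
        rw [Cset, Finset.mem_filter, Finset.mem_Iic] at hτ'
        rw [Cset, Finset.mem_filter, Finset.mem_Iic]
        have hj2 : K - j ≤ mu 0 := hj.2
        have hle : τ' ≤ fun i => mu i.succ := hτ'.1
        constructor
        · rw [Pi.le_def]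
          intro i
          refine Fin.cases ?_ ?_ i
          · simpa using hj2
          · intro i'
            simpa using hle i'
        · rw [Fin.sum_univ_succ]
          simp only [Fin.cons_zero, Fin.cons_succ]
          have h2 : ∑ i : Fin m, τ' i = j := hτ'.2
          have hj1 : j < K + 1 := hj.1
          omega
      · intro τ hτ
        rw [Cset, Finset.mem_filter, Finset.mem_Iic] at hτ
        have hsum : τ 0 + ∑ i : Fin m, τ i.succ = K := by
          rw [← Fin.sum_univ_succ]; exact hτ.2
        rw [Finset.mem_sigma, Finset.mem_filter, Finset.mem_range,
          Cset, Finset.mem_filter, Finset.mem_Iic]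
        dsimp only
        refine ⟨⟨by omega, ?_⟩, ?_, rfl⟩
        · have h1 : τ 0 ≤ mu 0 := hτ.1 0
          omega
        · rw [Pi.le_def]; intro i; exact hτ.1 i.succ
      · rintro ⟨j, τ'⟩ hx
        dsimp only
        rw [Finset.mem_sigma] at hx
        obtain ⟨hj, hτ'⟩ := hx
        rw [Cset, Finset.mem_filter] at hτ'
        have h2 : ∑ i : Fin m, τ' i = j := hτ'.2
        simp only [Fin.cons_succ]
        rw [h2]
      · intro τ hτ
        dsimp only
        rw [Cset, Finset.mem_filter] at hτ
        have hsum : τ 0 + ∑ i : Fin m, τ i.succ = K := by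
          rw [← Fin.sum_univ_succ]; exact hτ.2
        have h0 : K - ∑ i : Fin m, τ i.succ = τ 0 := by omega
        simp only [h0]
        exact Fin.cons_self_tail τ
      · rintro ⟨j, τ'⟩ hx
        dsimp only
        rw [Fin.prod_univ_succ]
        simp [Fin.cons_zero, Fin.cons_succ]

lemma prod_Hop_eq (m : ℕ) (mu τ : Fin m → ℕ) (hle : τ ≤ mu) :
    ∏ i, Hop (τ i) (qhat tv (mu i))
      = MvPolynomial.C ((1 - tv) ^ ell τ) * qhatProd tv (mu - τ) := by
  have hterm : ∀ i : Fin m,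
      Hop (τ i) (qhat tv (mu i))
      = (if τ i = 0 then (1 : SymF) else MvPolynomial.C (1 - tv)) * qhat tv ((mu - τ) i) := by
    intro i
    rw [Hop_qhat]
    by_cases h : τ i = 0
    · rw [if_pos h, if_pos h, one_mul]
      congr 1
      rw [Pi.sub_apply, h, Nat.sub_zero]
    · rw [if_neg h, if_pos (hle i), if_neg h]
      rfl
  rw [Finset.prod_congr rfl (fun i _ => hterm i), Finset.prod_mul_distrib]
  congr 1
  have h2 : ∏ i, (if τ i = 0 then (1 : SymF) else MvPolynomial.C (1 - tv))
      = ∏ i ∈ Finset.univ.filter (fun i => τ i ≠ 0), MvPolynomial.C (1 - tv) := by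
    rw [Finset.prod_filter]
    exact Finset.prod_congr rfl fun i _ => by by_cases h : τ i = 0 <;> simp [h]
  rw [h2, Finset.prod_const, ← map_pow]
  rfl

/-- Let k ≥ 0 and μ = (μ_1,…,μ_m) a partition of n.  For every f ∈ Λ,
⟨q̂_μ(t), h_k·f⟩ = Σ_{τ ∈ C(μ;k)} (1-t)^{l(τ)} ⟨q̂_{μ-τ}(t), f⟩
(i.e. h_k^* q̂_μ(t) = Σ_{τ ∈ C(μ;k)} (1-t)^{l(τ)} q̂_{μ-τ}(t)). -/
theorem hstar_qhatProd (k n m : ℕ) (mu : Fin m → ℕ)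
    (h_anti : ∀ i j : Fin m, i ≤ j → mu j ≤ mu i) (h_pos : ∀ i, 0 < mu i)
    (h_sum : ∑ i, mu i = n) :
    ∀ f : SymF,
      hall (qhatProd tv mu) (hh k * f) =
        ∑ τ ∈ Cset mu k, (1 - tv) ^ ell τ * hall (qhatProd tv (mu - τ)) f := by
  intro f
  rw [hall_hh_mul k, qhatProd, Hop_prod m mu k, hall_sum_left]
  refine Finset.sum_congr rfl fun τ hτ => ?_
  have hle : τ ≤ mu := by
    rw [Cset, Finset.mem_filter, Finset.mem_Iic] at hτ
    exact hτ.1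
  rw [prod_Hop_eq m mu τ hle, ← MvPolynomial.smul_eq_C_mul, hall_smul_left]

end
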